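/- In the field ℚ(t) of rational functions, the following 3×3 matrix identity holds: (1/((1-t⁴)(1-t⁶))) · [[1, t²+t⁴, t⁶], [t²+t⁴, 1+t²+t⁴+t⁶, t²+t⁴], [t⁶, t²+t⁴, 1]] = U · D · Uᵀ, where U = [[1, t², t⁶], [0, 1, t²+t⁴], [0, 0, 1]] and D = diag(1, 1/(1-t²), 1/((1-t⁴)(1-t⁶))). -/
import Mathlib


open Matrix

lemma aux_ne (n : ℕ) (hn : n ≠ 0) : (1 - RatFunc.X ^ n : RatFunc ℚ) ≠ 0 := by
  have : (1 - RatFunc.X ^ n : RatFunc ℚ) =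
      algebraMap (Polynomial ℚ) (RatFunc ℚ) (1 - Polynomial.X ^ n) := by
    simp [RatFunc.algebraMap_X]
  rw [this]
  apply RatFunc.algebraMap_ne_zero
  intro h
  have h1 : (Polynomial.X : Polynomial ℚ) ^ n = 1 := by linear_combination -h
  have := congrArg Polynomial.natDegree h1
  simp [Polynomial.natDegree_X_pow] at this
  exact hn this

lemma diag3 (a b c : RatFunc ℚ) :
    Matrix.diagonal ![a, b, c] = !![a, 0, 0; 0, b, 0; 0, 0, c] := by
  ext i j
  fin_cases i <;> fin_cases j <;>
    simp [Matrix.diagonal, Matrix.vecHead, Matrix.vecTail]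

set_option maxHeartbeats 4000000 in
set_option synthInstance.maxHeartbeats 1000000 in
lemma stmt6_aux :
    letI t : RatFunc ℚ := RatFunc.X
    (1 / ((1 - t ^ 4) * (1 - t ^ 6))) •
      (!![1, t ^ 2 + t ^ 4, t ^ 6;
          t ^ 2 + t ^ 4, 1 + t ^ 2 + t ^ 4 + t ^ 6, t ^ 2 + t ^ 4;
          t ^ 6, t ^ 2 + t ^ 4, 1] : Matrix (Fin 3) (Fin 3) (RatFunc ℚ)) =
    (!![1, t ^ 2, t ^ 6;
        0, 1, t ^ 2 + t ^ 4;
        0, 0, 1] : Matrix (Fin 3) (Fin 3) (RatFunc ℚ)) *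
      Matrix.diagonal ![1, 1 / (1 - t ^ 2), 1 / ((1 - t ^ 4) * (1 - t ^ 6))] *
      (!![1, t ^ 2, t ^ 6;
          0, 1, t ^ 2 + t ^ 4;
          0, 0, 1] : Matrix (Fin 3) (Fin 3) (RatFunc ℚ))ᵀ := by
  have h2 : (1 - (RatFunc.X : RatFunc ℚ) ^ 2) ≠ 0 := aux_ne 2 (by norm_num)
  have h4 : (1 - (RatFunc.X : RatFunc ℚ) ^ 4) ≠ 0 := aux_ne 4 (by norm_num)
  have h6 : (1 - (RatFunc.X : RatFunc ℚ) ^ 6) ≠ 0 := aux_ne 6 (by norm_num)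
  rw [diag3]
  ext i j
  fin_cases i <;> fin_cases j <;>
    simp [Matrix.mul_apply, Fin.sum_univ_succ, Matrix.vecHead, Matrix.vecTail] <;>
    field_simp <;> ring

set_option synthInstance.maxHeartbeats 1000000 in

/-- the Cartan matrix factorization `[P:L] = U · D · Uᵀ` for the
geometric extension algebra attached to the nilpotent cone of 𝔰𝔩₃. -/
theorem stmt6 :
    letI t : RatFunc ℚ := RatFunc.X
    (1 / ((1 - t ^ 4) * (1 - t ^ 6))) •
      (!![1, t ^ 2 + t ^ 4, t ^ 6;
          t ^ 2 + t ^ 4, 1 + t ^ 2 + t ^ 4 + t ^ 6, t ^ 2 + t ^ 4;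
          t ^ 6, t ^ 2 + t ^ 4, 1] : Matrix (Fin 3) (Fin 3) (RatFunc ℚ)) =
    (!![1, t ^ 2, t ^ 6;
        0, 1, t ^ 2 + t ^ 4;
        0, 0, 1] : Matrix (Fin 3) (Fin 3) (RatFunc ℚ)) *
      Matrix.diagonal ![1, 1 / (1 - t ^ 2), 1 / ((1 - t ^ 4) * (1 - t ^ 6))] *
      (!![1, t ^ 2, t ^ 6;
          0, 1, t ^ 2 + t ^ 4;
          0, 0, 1] : Matrix (Fin 3) (Fin 3) (RatFunc ℚ))ᵀ :=
  stmt6_aux
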